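/- Let m,n ≥ 0, a_1,…,a_m, b_1,…,b_n ∈ Σ, and let f : {0,1}^m → {0,1}^n be an injective adjacency-preserving map with index map f̂ and with f̄ : f̂^{-1}({1,…,m}) → {1,…,m} the induced bijection. Assume the label compatibility a_i = b_{f̄^{-1}(i)} for every i ∈ {1,…,m}. Then the pair consisting of f_0 = f on states and f̃(a_i,i) = (a_i, f̄^{-1}(i)) on actions defines a morphism of weak higher dimensional transition systems C_m[a_1,…,a_m] → C_n[b_1,…,b_n]: it takes every transition of C_m[a_1,…,a_m] to a transition of C_n[b_1,…,b_n]. -/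

import Mathlib

/-- An adjacency-preserving map between cubes: strictly increasing (for the
product order) and taking pairs at Hamming distance 1 to pairs at Hamming
distance 1. -/
def AdjPreserving {m n : ℕ} (f : (Fin m → Bool) → (Fin n → Bool)) : Prop :=
  StrictMono f ∧ ∀ ε ε' : Fin m → Bool,
    hammingDist ε ε' = 1 → hammingDist (f ε) (f ε') = 1

/-- Evaluation of a "generalized index" in `{1,…,m} ∪ {−∞,+∞}` (encoded as
`Fin m ⊕ Bool`, with `Sum.inr false = −∞` and `Sum.inr true = +∞`) on a vertex
`ε ∈ {0,1}^m`, with the conventions `ε_{−∞} = 0` and `ε_{+∞} = 1`. -/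
def evalIdx {m : ℕ} (ε : Fin m → Bool) : Fin m ⊕ Bool → Bool :=
  Sum.elim ε id
universe u u1 u2 u3 u4 u5 u6

/-- A transition structure over the set of labels `Λ`: a set of states `S`, a
set of actions `L`, a labelling map `μ : L → Λ`, and a set of transitions
`(α, u_1, …, u_n, β)` encoded as `T α [u_1, …, u_n] β`. Weak higher dimensional
transition systems are the transition structures whose transitions have
nonempty lists of actions and satisfying the Multiset and Coherence axioms. -/
structure TransSys (Λ : Type u) where
  /-- the states -/
  S : Type u1
  /-- the actions -/
  L : Type u2
  /-- the labelling map -/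
  μ : L → Λ
  /-- the transitions -/
  T : S → List L → S → Prop

/-- A morphism of (weak higher dimensional) transition systems: a pair of set
maps on states and actions commuting with the labelling maps and taking
transitions to transitions. -/
structure TransSys.Hom {Λ : Type u} (X : TransSys.{u, u1, u2} Λ)
    (Y : TransSys.{u, u3, u4} Λ) where
  /-- the map on states -/
  f0 : X.S → Y.S
  /-- the map on actions -/
  fa : X.L → Y.L
  label : ∀ x, Y.μ (fa x) = X.μ x
  map : ∀ (α : X.S) (l : List X.L) (β : X.S), X.T α l β → Y.T (f0 α) (l.map fa) (f0 β)

/-- Composition of morphisms of transition systems. -/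
def TransSys.Hom.comp {Λ : Type u} {X : TransSys.{u, u1, u2} Λ}
    {Y : TransSys.{u, u3, u4} Λ} {Z : TransSys.{u, u5, u6} Λ}
    (g : Y.Hom Z) (f : X.Hom Y) : X.Hom Z where
  f0 := fun x => g.f0 (f.f0 x)
  fa := fun x => g.fa (f.fa x)
  label := fun x => (g.label (f.fa x)).trans (f.label x)
  map := fun α l β h => by
    have h2 := g.map _ _ _ (f.map α l β h)
    rw [List.map_map] at h2
    exact h2

/-- The set of transitions of the cube `C_n[a_1,…,a_n]`: the states are the
elements of `{0,1}^n`, the actions are the indices `i ∈ {1,…,n}` (the action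
`i` standing for the pair `(a_i, i)`, labelled by `a_i`). -/
@[reducible] def CubeT (n : ℕ) (ε : Fin n → Bool) (l : List (Fin n)) (ε' : Fin n → Bool) :
    Prop :=
  l ≠ [] ∧ l.Nodup ∧ (∀ i, ε i ≤ ε' i) ∧ ∀ i : Fin n, ε i ≠ ε' i ↔ i ∈ l

/-- The cube `C_n[a_1,…,a_n]` as a (weak higher dimensional) transition
system. -/
@[reducible] def cube {Λ : Type u} (n : ℕ) (a : Fin n → Λ) : TransSys.{u, 0, 0} Λ where
  S := Fin n → Bool
  L := Fin n
  μ := a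
  T := CubeT n

/-- Let `f : {0,1}^m → {0,1}^n` be an injective adjacency-preserving map, with
index map `f̂` and with `s = f̄⁻¹ : {1,…,m} → {1,…,n}` the inverse of the
bijection induced by `f̂` on `f̂⁻¹({1,…,m})`. If the labels are compatible,
i.e. `a_i = b_{f̄⁻¹(i)}` for all `i`, then the pair consisting of `f` on
states and `(a_i, i) ↦ (a_i, f̄⁻¹(i))` on actions defines a morphism of weak
higher dimensional transition systems `C_m[a_1,…,a_m] → C_n[b_1,…,b_n]`. -/
theorem index_map_induces_cube_morphism {Λ : Type u} (m n : ℕ)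
    (a : Fin m → Λ) (b : Fin n → Λ)
    (f : (Fin m → Bool) → (Fin n → Bool))
    (hadj : AdjPreserving f) (hinj : Function.Injective f)
    (fhat : Fin n → Fin m ⊕ Bool) (s : Fin m → Fin n)
    (hf : ∀ (ε : Fin m → Bool) (i : Fin n), f ε i = evalIdx ε (fhat i))
    (hs : ∀ j : Fin m, fhat (s j) = Sum.inl j)
    (hs' : ∀ (i : Fin n) (j : Fin m), fhat i = Sum.inl j → i = s j)
    (hlabel : ∀ j : Fin m, a j = b (s j)) :
    ∃ F : (cube m a).Hom (cube n b), F.f0 = f ∧ F.fa = s := by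
  have sinj : Function.Injective s := fun j j' h => by
    have := (hs j).symm.trans (h ▸ hs j')
    exact Sum.inl.inj this
  refine ⟨{ f0 := f, fa := s, label := fun j => (hlabel j).symm, map := ?_ }, rfl, rfl⟩
  rintro α l β ⟨hne, hnd, hle, hiff⟩
  refine ⟨by simpa using hne, hnd.map sinj, ?_, ?_⟩
  · intro i
    rw [hf, hf]
    cases h : fhat i with
    | inl j => simp [evalIdx, hle j]
    | inr c => simp [evalIdx]
  · intro i
    rw [hf, hf]
    cases h : fhat i with
    | inl j =>
      simp only [evalIdx, Sum.elim_inl]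
      rw [hiff j]
      constructor
      · intro hj
        exact List.mem_map.2 ⟨j, hj, (hs' i j h).symm⟩
      · rintro hi
        obtain ⟨j', hj', hj'i⟩ := List.mem_map.1 hi
        have : fhat i = Sum.inl j' := hj'i ▸ hs j'
        have : j = j' := Sum.inl.inj (h.symm.trans this)
        exact this ▸ hj'
    | inr c =>
      simp only [evalIdx, Sum.elim_inr, ne_eq, not_true_eq_false, false_iff, id]
      intro hi
      obtain ⟨j', hj', hj'i⟩ := List.mem_map.1 hi
      have : fhat i = Sum.inl j' := hj'i ▸ hs j'
      simp [h] at this
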